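/- Let φ ∈ E satisfy the first law with temperature 𝒯 > 0 and potentials Y_1, …, Y_p, and suppose the continuous linear map E → ℝ^{p+1} given by u ↦ (DM_φ(u), DX^1_φ(u), …, DX^p_φ(u)) is surjective (Condition A). If there exists u ∈ E with DM_φ(u) = DX^1_φ(u) = ⋯ = DX^p_φ(u) = 0 and B_φ(u,u) < 0, then there exists w ∈ E such that the curve γ(t) = φ + t·u + (t²/2)·w satisfies: (M∘γ)′(0) = (S∘γ)′(0) = (X^i∘γ)′(0) = 0 for all i, (M∘γ)″(0) = (X^i∘γ)″(0) = 0 for all i, and (S∘γ)″(0) > 0. That is, φ admits a field variation keeping M and all X^i fixed to first and second order along which the entropy has positive second variation, so φ is thermodynamically unstable. -/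

import Mathlib

open Filter Topology

/-- The second Fréchet derivative of `f : E → ℝ` at `φ`, applied to `u`, `v`. -/
noncomputable def D2 {E : Type*} [NormedAddCommGroup E] [NormedSpace ℝ E]
    (f : E → ℝ) (φ u v : E) : ℝ :=
  fderiv ℝ (fderiv ℝ f) φ u v

/-- `φ` satisfies the first law with temperature `T` and potentials `Y i`:
`DM_φ = T·DS_φ + ∑ i, Y i · DX^i_φ` as continuous linear functionals. -/
def FirstLaw {E : Type*} [NormedAddCommGroup E] [NormedSpace ℝ E] {p : ℕ}
    (M S : E → ℝ) (X : Fin p → E → ℝ) (φ : E) (T : ℝ) (Y : Fin p → ℝ) : Prop :=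
  fderiv ℝ M φ = T • fderiv ℝ S φ + ∑ i, Y i • fderiv ℝ (X i) φ

/-- The canonical bilinear form
`B_φ(u,v) = D²M_φ(u,v) − T·D²S_φ(u,v) − ∑ i, Y i·D²X^i_φ(u,v)`. -/
noncomputable def Bform {E : Type*} [NormedAddCommGroup E] [NormedSpace ℝ E] {p : ℕ}
    (M S : E → ℝ) (X : Fin p → E → ℝ) (φ : E) (T : ℝ) (Y : Fin p → ℝ) (u v : E) : ℝ :=
  D2 M φ u v - T * D2 S φ u v - ∑ i, Y i * D2 (X i) φ u v

/-- First and second derivatives of a smooth function along the curve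
`t ↦ φ + t • u + (t²/2) • w`. -/
lemma curve_derivs {E : Type*} [NormedAddCommGroup E] [NormedSpace ℝ E]
    (f : E → ℝ) (hf : ContDiff ℝ (⊤ : ℕ∞) f) (φ u w : E) :
    deriv (f ∘ fun t : ℝ => φ + t • u + (t ^ 2 / 2) • w) 0 = fderiv ℝ f φ u ∧
    deriv (deriv (f ∘ fun t : ℝ => φ + t • u + (t ^ 2 / 2) • w)) 0
      = fderiv ℝ (fderiv ℝ f) φ u u + fderiv ℝ f φ w := by
  set γ : ℝ → E := fun t => φ + t • u + (t ^ 2 / 2) • w with hγdef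
  have hγ0 : γ 0 = φ := by simp [hγdef]
  have hγ : ∀ t, HasDerivAt γ (u + t • w) t := by
    intro t
    have h1 : HasDerivAt (fun t : ℝ => t • u) u t := by
      simpa using (hasDerivAt_id t).smul_const u
    have h2' : HasDerivAt (fun t : ℝ => t ^ 2 / 2) t t := by
      have := (hasDerivAt_pow 2 t).div_const 2
      simpa [mul_comm] using this
    have h2 : HasDerivAt (fun t : ℝ => (t ^ 2 / 2) • w) (t • w) t := h2'.smul_const w
    have h3 := ((hasDerivAt_const t φ).add h1).add h2
    rw [zero_add] at h3
    exact h3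
  have hfd : Differentiable ℝ f := hf.differentiable (by simp)
  have hd1 : ∀ t, HasDerivAt (f ∘ γ) (fderiv ℝ f (γ t) (u + t • w)) t := fun t =>
    (hfd (γ t)).hasFDerivAt.comp_hasDerivAt t (hγ t)
  have hderiv_eq : deriv (f ∘ γ) = fun t => fderiv ℝ f (γ t) (u + t • w) :=
    funext fun t => (hd1 t).deriv
  constructor
  · rw [hderiv_eq]; simp [hγ0]
  · have hA : ContDiff ℝ (⊤ : ℕ∞) (fderiv ℝ f) :=
      hf.fderiv_right (by exact_mod_cast le_top)
    have hAd : Differentiable ℝ (fderiv ℝ f) := hA.differentiable (by simp)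
    have hAγ : HasDerivAt (fun t => fderiv ℝ f (γ t)) (fderiv ℝ (fderiv ℝ f) φ u) 0 := by
      have := (hAd (γ 0)).hasFDerivAt.comp_hasDerivAt 0 (hγ 0)
      simp only [hγ0, zero_smul, add_zero] at this
      exact this
    have hvw : HasDerivAt (fun t : ℝ => u + t • w) w 0 := by
      simpa using ((hasDerivAt_id (0:ℝ)).smul_const w).const_add u
    have h2 := hAγ.clm_apply hvw
    rw [hderiv_eq]
    have := h2.deriv
    simpa [hγ0] using this

/-- If `φ` satisfies the first law with `T > 0`, Condition A holds (the map
`u ↦ (DM_φ(u), DX^i_φ(u))` is surjective onto `ℝ × ℝ^p`), and there is a first-order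
perturbation `u` with `DM_φ(u) = DX^i_φ(u) = 0` and `B_φ(u,u) < 0`, then there is a
second-order perturbation `w` so that along `γ(t) = φ + t·u + (t²/2)·w` the quantities
`M` and all `X^i` are fixed to first and second order, `S` is fixed to first order,
and `S` has positive second variation; hence `φ` is thermodynamically unstable. -/
theorem thermodynamic_instability_of_Bform_neg
    {E : Type*} [NormedAddCommGroup E] [NormedSpace ℝ E] [CompleteSpace E]
    {p : ℕ} (M S : E → ℝ) (X : Fin p → E → ℝ)
    (hM : ContDiff ℝ (⊤ : ℕ∞) M) (hS : ContDiff ℝ (⊤ : ℕ∞) S)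
    (hX : ∀ i, ContDiff ℝ (⊤ : ℕ∞) (X i))
    (φ : E) (T : ℝ) (hT : 0 < T) (Y : Fin p → ℝ) (hfl : FirstLaw M S X φ T Y)
    (hcondA : Function.Surjective
      (fun u : E => ((fderiv ℝ M φ u, fun i => fderiv ℝ (X i) φ u) : ℝ × (Fin p → ℝ))))
    (u : E) (hMu : fderiv ℝ M φ u = 0) (hXu : ∀ i, fderiv ℝ (X i) φ u = 0)
    (hB : Bform M S X φ T Y u u < 0) :
    ∃ w : E,
      let γ : ℝ → E := fun t => φ + t • u + (t ^ 2 / 2) • w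
      deriv (M ∘ γ) 0 = 0 ∧ deriv (S ∘ γ) 0 = 0 ∧ (∀ i, deriv (X i ∘ γ) 0 = 0) ∧
      deriv (deriv (M ∘ γ)) 0 = 0 ∧ (∀ i, deriv (deriv (X i ∘ γ)) 0 = 0) ∧
      0 < deriv (deriv (S ∘ γ)) 0 := by
  unfold FirstLaw at hfl
  unfold Bform D2 at hB
  obtain ⟨w, hw⟩ := hcondA (-(fderiv ℝ (fderiv ℝ M) φ u u),
    fun i => -(fderiv ℝ (fderiv ℝ (X i)) φ u u))
  have hMw : fderiv ℝ M φ w = -(fderiv ℝ (fderiv ℝ M) φ u u) := congrArg Prod.fst hw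
  have hXw : ∀ i, fderiv ℝ (X i) φ w = -(fderiv ℝ (fderiv ℝ (X i)) φ u u) :=
    fun i => congrFun (congrArg Prod.snd hw) i
  have hflu := congrArg (fun L : E →L[ℝ] ℝ => L u) hfl
  simp only [ContinuousLinearMap.add_apply, ContinuousLinearMap.coe_sum',
    Finset.sum_apply, ContinuousLinearMap.coe_smul', Pi.smul_apply, smul_eq_mul,
    hMu, hXu, mul_zero, Finset.sum_const_zero, add_zero] at hflu
  have hSu : fderiv ℝ S φ u = 0 := by
    have h : T * fderiv ℝ S φ u = 0 := by linarith [hflu]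
    exact (mul_eq_zero.mp h).resolve_left hT.ne'
  have hflw := congrArg (fun L : E →L[ℝ] ℝ => L w) hfl
  simp only [ContinuousLinearMap.add_apply, ContinuousLinearMap.coe_sum',
    Finset.sum_apply, ContinuousLinearMap.coe_smul', Pi.smul_apply, smul_eq_mul] at hflw
  refine ⟨w, ?_, ?_, ?_, ?_, ?_, ?_⟩
  · rw [(curve_derivs M hM φ u w).1, hMu]
  · rw [(curve_derivs S hS φ u w).1, hSu]
  · intro i; rw [(curve_derivs (X i) (hX i) φ u w).1, hXu i]
  · rw [(curve_derivs M hM φ u w).2, hMw]; ring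
  · intro i; rw [(curve_derivs (X i) (hX i) φ u w).2, hXw i]; ring
  · rw [(curve_derivs S hS φ u w).2]
    have hsum : ∑ i, Y i * fderiv ℝ (X i) φ w
        = -∑ i, Y i * fderiv ℝ (fderiv ℝ (X i)) φ u u := by
      rw [← Finset.sum_neg_distrib]
      exact Finset.sum_congr rfl fun i _ => by rw [hXw i]; ring
    have key : T * (fderiv ℝ (fderiv ℝ S) φ u u + fderiv ℝ S φ w)
        = -(fderiv ℝ (fderiv ℝ M) φ u u - T * fderiv ℝ (fderiv ℝ S) φ u u
          - ∑ i, Y i * fderiv ℝ (fderiv ℝ (X i)) φ u u) := by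
      rw [mul_add]
      have : T * fderiv ℝ S φ w = fderiv ℝ M φ w - ∑ i, Y i * fderiv ℝ (X i) φ w := by
        rw [hflw]; ring
      rw [this, hMw, hsum]; ring
    nlinarith [key]
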